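/- For any finite connected simple graphs G and H, dmg(G □ H) ≤ max{ dmg(G)·|V(H)| , dmg'(H)·|V(G)| }. -/
import Mathlib


open SimpleGraph

/-!
Formalization of the game of Cops and Robber (one cop, one robber) and the damage number.

Round 0: the cop chooses a starting vertex, then the robber chooses a starting vertex.
In each subsequent round the cop moves to an adjacent vertex or passes, after which the
robber moves to an adjacent vertex or passes.  Strategies are modelled as functions of
the full history of positions (most recent first).
-/

/-- A cop strategy: an initial vertex together with a move function taking the history of
cop positions (most recent first, nonempty) and of robber positions (most recent first)
to the cop's next position. -/
structure CopStrategy (V : Type*) where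
  init : V
  move : List V → List V → V

/-- A robber strategy: an initial vertex chosen in response to the cop's initial vertex,
together with a move function taking the history of cop positions (most recent first,
including the cop's move from the current round) and of robber positions (most recent
first) to the robber's next position. -/
structure RobberStrategy (V : Type*) where
  init : V → V
  move : List V → List V → V

variable {V : Type*}

/-- A cop move function is legal for `G` if from any position it either passes or
moves along an edge of `G`. -/
def LegalCopMove (G : SimpleGraph V) (cs : List V → List V → V) : Prop :=
  ∀ (c : V) (ch rh : List V), cs (c :: ch) rh = c ∨ G.Adj c (cs (c :: ch) rh)

/-- A robber move function is legal for `G` if from any position it either passes or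
moves along an edge of `G`. -/
def LegalRobMove (G : SimpleGraph V) (rs : List V → List V → V) : Prop :=
  ∀ (r : V) (ch rh : List V), rs ch (r :: rh) = r ∨ G.Adj r (rs ch (r :: rh))

/-- A legal cop strategy: every move passes or goes along an edge. -/
def CopStrategy.Legal (G : SimpleGraph V) (CS : CopStrategy V) : Prop :=
  LegalCopMove G CS.move

/-- A legal robber strategy: every move passes or goes along an edge. -/
def RobberStrategy.Legal (G : SimpleGraph V) (RS : RobberStrategy V) : Prop :=
  LegalRobMove G RS.move

/-- `play CS RS n = (cₙ, rₙ, earlier cop positions, earlier robber positions)`: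
the state of the game after round `n`, when the cop plays `CS` and the robber plays `RS`.
In each round the cop moves first, then the robber moves. -/
def play (CS : CopStrategy V) (RS : RobberStrategy V) : ℕ → V × V × List V × List V
  | 0 => (CS.init, RS.init CS.init, [], [])
  | n + 1 =>
    let p := play CS RS n
    let c := CS.move (p.1 :: p.2.2.1) (p.2.1 :: p.2.2.2)
    let r := RS.move (c :: p.1 :: p.2.2.1) (p.2.1 :: p.2.2.2)
    (c, r, p.1 :: p.2.2.1, p.2.1 :: p.2.2.2)

/-- The cop's position after its move in round `n`. -/
def copPos (CS : CopStrategy V) (RS : RobberStrategy V) (n : ℕ) : V := (play CS RS n).1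

/-- The robber's position after its move in round `n`. -/
def robPos (CS : CopStrategy V) (RS : RobberStrategy V) (n : ℕ) : V := (play CS RS n).2.1

/-- The robber damages `v`: at the end of some round `n` the robber occupies `v`, having
never been captured up to that point (neither by moving onto the cop, nor by the cop's
move in any round up to and including round `n + 1`); it then passes or moves in
round `n + 1`, damaging `v`. -/
def Damages (CS : CopStrategy V) (RS : RobberStrategy V) (v : V) : Prop :=
  ∃ n, robPos CS RS n = v ∧
    ∀ k ≤ n, copPos CS RS k ≠ robPos CS RS k ∧ copPos CS RS (k + 1) ≠ robPos CS RS k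

/-- The set of vertices damaged by the robber during the play of `CS` against `RS`. -/
def damageSet (CS : CopStrategy V) (RS : RobberStrategy V) : Set V :=
  {v | Damages CS RS v}

/-- The damage number of `G`: the minimum over legal cop strategies of the maximum over
legal robber strategies of the number of distinct damaged vertices. -/
noncomputable def dmg (G : SimpleGraph V) : ℕ :=
  sInf { n | ∃ CS : CopStrategy V, CS.Legal G ∧
    ∀ RS : RobberStrategy V, RS.Legal G → (damageSet CS RS).ncard ≤ n }

/-- A cop strategy passes during the first round. -/
def CopStrategy.PassesFirst (CS : CopStrategy V) : Prop :=
  ∀ r : V, CS.move [CS.init] [r] = CS.init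

/-- The damage number of `G` when the cop is required to pass during the first round. -/
noncomputable def dmg' (G : SimpleGraph V) : ℕ :=
  sInf { n | ∃ CS : CopStrategy V, CS.Legal G ∧ CS.PassesFirst ∧
    ∀ RS : RobberStrategy V, RS.Legal G → (damageSet CS RS).ncard ≤ n }

/-- The eccentricity of a vertex: the maximum distance from `u` to any vertex. -/
noncomputable def ecc (G : SimpleGraph V) (u : V) : ℕ := sSup (Set.range (G.dist u))

/-- The radius of a graph: the minimum eccentricity over all vertices. -/
noncomputable def gRadius (G : SimpleGraph V) : ℕ := sInf (Set.range (ecc G))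

-- history lemmas
def copHist (CS : CopStrategy V) (RS : RobberStrategy V) (n : ℕ) : List V :=
  (play CS RS n).1 :: (play CS RS n).2.2.1
def robHist (CS : CopStrategy V) (RS : RobberStrategy V) (n : ℕ) : List V :=
  (play CS RS n).2.1 :: (play CS RS n).2.2.2

variable (CS : CopStrategy V) (RS : RobberStrategy V)

lemma copHist_succ (n : ℕ) : copHist CS RS (n+1) = copPos CS RS (n+1) :: copHist CS RS n := rfl
lemma robHist_succ (n : ℕ) : robHist CS RS (n+1) = robPos CS RS (n+1) :: robHist CS RS n := rfl
lemma copPos_succ (n : ℕ) : copPos CS RS (n+1) = CS.move (copHist CS RS n) (robHist CS RS n) := rfl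
lemma robPos_succ (n : ℕ) :
    robPos CS RS (n+1) = RS.move (copPos CS RS (n+1) :: copHist CS RS n) (robHist CS RS n) := rfl
lemma copPos_zero : copPos CS RS 0 = CS.init := rfl
lemma robPos_zero : robPos CS RS 0 = RS.init CS.init := rfl
lemma copHist_zero : copHist CS RS 0 = [CS.init] := rfl
lemma robHist_zero : robHist CS RS 0 = [RS.init CS.init] := rfl

/-! ## the product strategy state machine -/

section Prod
variable {α β : Type*}

structure PState (α β : Type*) where
  cg : α
  ch : β
  Gc : List α
  Gr : List α
  Hc : List β
  Hr : List β
  shG : Prop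
  shH : Prop
  rp : α × β

def PState.pos (s : PState α β) : α × β := (s.cg, s.ch)

open Classical in
noncomputable def pstep (CG : CopStrategy α) (CH : CopStrategy β)
    (s : PState α β) (r : α × β) : PState α β :=
  if r.1 ≠ s.rp.1 then
    if s.shG then { s with cg := r.1, rp := r }
    else if s.cg = r.1 then { s with shG := True, rp := r }
    else
      { s with cg := CG.move s.Gc (r.1 :: s.Gr),
               Gc := CG.move s.Gc (r.1 :: s.Gr) :: s.Gc,
               Gr := r.1 :: s.Gr,
               shG := CG.move s.Gc (r.1 :: s.Gr) = r.1, rp := r }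
  else
    if s.shH then { s with ch := r.2, rp := r }
    else if s.ch = r.2 then { s with shH := True, rp := r }
    else
      { s with ch := CH.move s.Hc (r.2 :: s.Hr),
               Hc := CH.move s.Hc (r.2 :: s.Hr) :: s.Hc,
               Hr := r.2 :: s.Hr,
               shH := CH.move s.Hc (r.2 :: s.Hr) = r.2, rp := r }

open Classical in
noncomputable def pinit (CG : CopStrategy α) (CH : CopStrategy β) (r : α × β) : PState α β where
  cg := if CG.init = r.1 then CG.init else CG.move [CG.init] [r.1]
  ch := if CH.init = r.2 then CH.init else CH.move [CH.init] [r.2]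
  Gc := if CG.init = r.1 then [CG.init] else [CG.move [CG.init] [r.1], CG.init]
  Gr := [r.1]
  Hc := if CH.init = r.2 then [CH.init] else [CH.move [CH.init] [r.2], CH.init]
  Hr := [r.2]
  shG := CG.init = r.1 ∨ CG.move [CG.init] [r.1] = r.1
  shH := CH.init = r.2 ∨ CH.move [CH.init] [r.2] = r.2
  rp := r

noncomputable def stAux [Nonempty α] [Nonempty β]
    (CG : CopStrategy α) (CH : CopStrategy β) : List (α × β) → PState α β
  | [] => pinit CG CH (Classical.arbitrary _)
  | [r] => pinit CG CH r
  | r :: a :: l => pstep CG CH (stAux CG CH (a :: l)) r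

open Classical in
noncomputable def prodCop [Nonempty α] [Nonempty β] (G : SimpleGraph α) (H : SimpleGraph β)
    (CG : CopStrategy α) (CH : CopStrategy β) : CopStrategy (α × β) where
  init := (CG.init, CH.init)
  move := fun ch rh =>
    match ch with
    | [] => (stAux CG CH rh).pos
    | c :: _ =>
      if (stAux CG CH rh).pos = c ∨ (G □ H).Adj c (stAux CG CH rh).pos
      then (stAux CG CH rh).pos else c

lemma prodCop_legal [Nonempty α] [Nonempty β] (G : SimpleGraph α) (H : SimpleGraph β)
    (CG : CopStrategy α) (CH : CopStrategy β) : (prodCop G H CG CH).Legal (G □ H) := by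
  intro c ch rh
  unfold prodCop
  dsimp only
  split
  · next h => exact h
  · exact Or.inl rfl

end Prod

section Analysis
variable {α β : Type*} [Nonempty α] [Nonempty β]
variable (G : SimpleGraph α) (H : SimpleGraph β) (CG : CopStrategy α) (CH : CopStrategy β)
variable (RS : RobberStrategy (α × β))

noncomputable def pC (n : ℕ) : α × β := copPos (prodCop G H CG CH) RS n
noncomputable def pR (n : ℕ) : α × β := robPos (prodCop G H CG CH) RS n
noncomputable def pS (n : ℕ) : PState α β :=
  stAux CG CH (robHist (prodCop G H CG CH) RS n)

lemma pS_zero : pS G H CG CH RS 0 = pinit CG CH (pR G H CG CH RS 0) := rfl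

lemma pS_succ (n : ℕ) :
    pS G H CG CH RS (n+1) = pstep CG CH (pS G H CG CH RS n) (pR G H CG CH RS (n+1)) := rfl

lemma pC_zero : pC G H CG CH RS 0 = (CG.init, CH.init) := rfl

open Classical in
lemma pC_succ (n : ℕ) :
    pC G H CG CH RS (n+1) =
      if (pS G H CG CH RS n).pos = pC G H CG CH RS n ∨
          (G □ H).Adj (pC G H CG CH RS n) (pS G H CG CH RS n).pos
      then (pS G H CG CH RS n).pos else pC G H CG CH RS n := rfl

lemma pR_step (hRS : RS.Legal (G □ H)) (n : ℕ) :
    pR G H CG CH RS (n+1) = pR G H CG CH RS n ∨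
      (G □ H).Adj (pR G H CG CH RS n) (pR G H CG CH RS (n+1)) :=
  hRS (pR G H CG CH RS n) _ _

lemma pstep_cases (CG : CopStrategy α) (CH : CopStrategy β) (s : PState α β) (r : α × β) :
    (r.1 ≠ s.rp.1 ∧ s.shG ∧ pstep CG CH s r = { s with cg := r.1, rp := r }) ∨
    (r.1 ≠ s.rp.1 ∧ ¬ s.shG ∧ s.cg = r.1 ∧
      pstep CG CH s r = { s with shG := True, rp := r }) ∨
    (r.1 ≠ s.rp.1 ∧ ¬ s.shG ∧ s.cg ≠ r.1 ∧
      pstep CG CH s r = { s with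
          cg := CG.move s.Gc (r.1 :: s.Gr),
          Gc := CG.move s.Gc (r.1 :: s.Gr) :: s.Gc,
          Gr := r.1 :: s.Gr,
          shG := (CG.move s.Gc (r.1 :: s.Gr) = r.1),
          rp := r }) ∨
    (r.1 = s.rp.1 ∧ s.shH ∧ pstep CG CH s r = { s with ch := r.2, rp := r }) ∨
    (r.1 = s.rp.1 ∧ ¬ s.shH ∧ s.ch = r.2 ∧
      pstep CG CH s r = { s with shH := True, rp := r }) ∨
    (r.1 = s.rp.1 ∧ ¬ s.shH ∧ s.ch ≠ r.2 ∧
      pstep CG CH s r = { s with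
          ch := CH.move s.Hc (r.2 :: s.Hr),
          Hc := CH.move s.Hc (r.2 :: s.Hr) :: s.Hc,
          Hr := r.2 :: s.Hr,
          shH := (CH.move s.Hc (r.2 :: s.Hr) = r.2),
          rp := r }) := by
  classical
  unfold pstep
  by_cases h1 : r.1 ≠ s.rp.1
  · rw [if_pos h1]
    by_cases h2 : s.shG
    · rw [if_pos h2]; exact Or.inl ⟨h1, h2, rfl⟩
    · rw [if_neg h2]
      by_cases h3 : s.cg = r.1
      · rw [if_pos h3]; exact Or.inr (Or.inl ⟨h1, h2, h3, rfl⟩)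
      · rw [if_neg h3]; exact Or.inr (Or.inr (Or.inl ⟨h1, h2, h3, rfl⟩))
  · rw [if_neg h1]
    push_neg at h1
    by_cases h2 : s.shH
    · rw [if_pos h2]; exact Or.inr (Or.inr (Or.inr (Or.inl ⟨h1, h2, rfl⟩)))
    · rw [if_neg h2]
      by_cases h3 : s.ch = r.2
      · rw [if_pos h3]; exact Or.inr (Or.inr (Or.inr (Or.inr (Or.inl ⟨h1, h2, h3, rfl⟩))))
      · rw [if_neg h3]; exact Or.inr (Or.inr (Or.inr (Or.inr (Or.inr ⟨h1, h2, h3, rfl⟩))))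

lemma pstep_Gr (CG : CopStrategy α) (CH : CopStrategy β) (s : PState α β) (r : α × β) :
    (pstep CG CH s r).Gr = s.Gr ∨ (pstep CG CH s r).Gr = r.1 :: s.Gr := by
  rcases pstep_cases CG CH s r with ⟨_,_,hs⟩|⟨_,_,_,hs⟩|⟨_,_,_,hs⟩|⟨_,_,hs⟩|⟨_,_,_,hs⟩|⟨_,_,_,hs⟩ <;>
    rw [hs] <;> simp

lemma pstep_Hr (CG : CopStrategy α) (CH : CopStrategy β) (s : PState α β) (r : α × β) :
    (pstep CG CH s r).Hr = s.Hr ∨ (pstep CG CH s r).Hr = r.2 :: s.Hr := by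
  rcases pstep_cases CG CH s r with ⟨_,_,hs⟩|⟨_,_,_,hs⟩|⟨_,_,_,hs⟩|⟨_,_,hs⟩|⟨_,_,_,hs⟩|⟨_,_,_,hs⟩ <;>
    rw [hs] <;> simp

lemma pS_Gr_suffix {n m : ℕ} (h : n ≤ m) :
    (pS G H CG CH RS n).Gr <:+ (pS G H CG CH RS m).Gr := by
  induction m with
  | zero => cases Nat.le_zero.mp h; exact List.suffix_refl _
  | succ m ih =>
    rcases Nat.lt_or_ge n (m+1) with hlt | hge
    · have h' := ih (Nat.lt_succ_iff.mp hlt)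
      refine h'.trans ?_
      rw [pS_succ]
      rcases pstep_Gr CG CH (pS G H CG CH RS m) (pR G H CG CH RS (m+1)) with h2 | h2 <;>
        rw [h2] <;> try exact List.suffix_cons _ _
    · have : n = m + 1 := le_antisymm h hge
      subst this; exact List.suffix_refl _

lemma pS_Hr_suffix {n m : ℕ} (h : n ≤ m) :
    (pS G H CG CH RS n).Hr <:+ (pS G H CG CH RS m).Hr := by
  induction m with
  | zero => cases Nat.le_zero.mp h; exact List.suffix_refl _
  | succ m ih =>
    rcases Nat.lt_or_ge n (m+1) with hlt | hge
    · have h' := ih (Nat.lt_succ_iff.mp hlt)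
      refine h'.trans ?_
      rw [pS_succ]
      rcases pstep_Hr CG CH (pS G H CG CH RS m) (pR G H CG CH RS (m+1)) with h2 | h2 <;>
        rw [h2] <;> try exact List.suffix_cons _ _
    · have : n = m + 1 := le_antisymm h hge
      subst this; exact List.suffix_refl _

lemma push_unique_G {a b : ℕ} {l : List α}
    (ha : (pS G H CG CH RS a).Gr = l) (ha' : (pS G H CG CH RS (a+1)).Gr ≠ l)
    (hb : (pS G H CG CH RS b).Gr = l) (hb' : (pS G H CG CH RS (b+1)).Gr ≠ l) : a = b := by
  by_contra hne
  rcases Nat.lt_or_ge a b with hab | hab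
  · have h1 : (pS G H CG CH RS (a+1)).Gr <:+ l := by
      rw [← hb]; exact pS_Gr_suffix G H CG CH RS hab
    have h2 : l <:+ (pS G H CG CH RS (a+1)).Gr := by
      rw [← ha]; exact pS_Gr_suffix G H CG CH RS (Nat.le_succ a)
    exact ha' (h1.eq_of_length (le_antisymm h1.length_le h2.length_le))
  · have hba : b < a := lt_of_le_of_ne hab (Ne.symm hne)
    have h1 : (pS G H CG CH RS (b+1)).Gr <:+ l := by
      rw [← ha]; exact pS_Gr_suffix G H CG CH RS hba
    have h2 : l <:+ (pS G H CG CH RS (b+1)).Gr := by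
      rw [← hb]; exact pS_Gr_suffix G H CG CH RS (Nat.le_succ b)
    exact hb' (h1.eq_of_length (le_antisymm h1.length_le h2.length_le))

lemma push_unique_H {a b : ℕ} {l : List β}
    (ha : (pS G H CG CH RS a).Hr = l) (ha' : (pS G H CG CH RS (a+1)).Hr ≠ l)
    (hb : (pS G H CG CH RS b).Hr = l) (hb' : (pS G H CG CH RS (b+1)).Hr ≠ l) : a = b := by
  by_contra hne
  rcases Nat.lt_or_ge a b with hab | hab
  · have h1 : (pS G H CG CH RS (a+1)).Hr <:+ l := by
      rw [← hb]; exact pS_Hr_suffix G H CG CH RS hab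
    have h2 : l <:+ (pS G H CG CH RS (a+1)).Hr := by
      rw [← ha]; exact pS_Hr_suffix G H CG CH RS (Nat.le_succ a)
    exact ha' (h1.eq_of_length (le_antisymm h1.length_le h2.length_le))
  · have hba : b < a := lt_of_le_of_ne hab (Ne.symm hne)
    have h1 : (pS G H CG CH RS (b+1)).Hr <:+ l := by
      rw [← ha]; exact pS_Hr_suffix G H CG CH RS hba
    have h2 : l <:+ (pS G H CG CH RS (b+1)).Hr := by
      rw [← hb]; exact pS_Hr_suffix G H CG CH RS (Nat.le_succ b)
    exact hb' (h1.eq_of_length (le_antisymm h1.length_le h2.length_le))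

open Classical in
noncomputable def nextG (l : List α) : α :=
  if h : ∃ n, (pS G H CG CH RS n).Gr = l ∧ (pS G H CG CH RS (n+1)).Gr ≠ l
  then (pR G H CG CH RS (h.choose + 1)).1
  else match l with
    | [] => Classical.choice ‹Nonempty α›
    | a :: _ => a

open Classical in
noncomputable def nextH (l : List β) : β :=
  if h : ∃ n, (pS G H CG CH RS n).Hr = l ∧ (pS G H CG CH RS (n+1)).Hr ≠ l
  then (pR G H CG CH RS (h.choose + 1)).2
  else match l with
    | [] => Classical.choice ‹Nonempty β›
    | a :: _ => a

noncomputable def RSG : RobberStrategy α :=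
  ⟨fun _ => (pR G H CG CH RS 0).1, fun _ rh => nextG G H CG CH RS rh⟩

noncomputable def RSH : RobberStrategy β :=
  ⟨fun _ => (pR G H CG CH RS 0).2, fun _ rh => nextH G H CG CH RS rh⟩

lemma nextG_eq {n : ℕ} {l : List α} {x : α} (h1 : (pS G H CG CH RS n).Gr = l)
    (h2 : (pS G H CG CH RS (n+1)).Gr = x :: l) : nextG G H CG CH RS l = x := by
  have hne : (pS G H CG CH RS (n+1)).Gr ≠ l := by rw [h2]; exact List.cons_ne_self x l
  have hex : ∃ m, (pS G H CG CH RS m).Gr = l ∧ (pS G H CG CH RS (m+1)).Gr ≠ l := ⟨n, h1, hne⟩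
  unfold nextG
  rw [dif_pos hex]
  obtain ⟨hc1, hc2⟩ := hex.choose_spec
  have heq : hex.choose = n := push_unique_G G H CG CH RS hc1 hc2 h1 hne
  rw [heq]
  rcases pstep_Gr CG CH (pS G H CG CH RS n) (pR G H CG CH RS (n+1)) with hg | hg <;>
    rw [← pS_succ] at hg
  · rw [h2, h1] at hg; exact absurd hg (List.cons_ne_self x l)
  · rw [h2] at hg; exact (List.cons.injEq _ _ _ _ ▸ hg).1.symm

lemma nextH_eq {n : ℕ} {l : List β} {x : β} (h1 : (pS G H CG CH RS n).Hr = l)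
    (h2 : (pS G H CG CH RS (n+1)).Hr = x :: l) : nextH G H CG CH RS l = x := by
  have hne : (pS G H CG CH RS (n+1)).Hr ≠ l := by rw [h2]; exact List.cons_ne_self x l
  have hex : ∃ m, (pS G H CG CH RS m).Hr = l ∧ (pS G H CG CH RS (m+1)).Hr ≠ l := ⟨n, h1, hne⟩
  unfold nextH
  rw [dif_pos hex]
  obtain ⟨hc1, hc2⟩ := hex.choose_spec
  have heq : hex.choose = n := push_unique_H G H CG CH RS hc1 hc2 h1 hne
  rw [heq]
  rcases pstep_Hr CG CH (pS G H CG CH RS n) (pR G H CG CH RS (n+1)) with hg | hg <;>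
    rw [← pS_succ] at hg
  · rw [h2, h1] at hg; exact absurd hg (List.cons_ne_self x l)
  · rw [h2] at hg; exact (List.cons.injEq _ _ _ _ ▸ hg).1.symm

open Classical in
lemma pinit_cg (r : α × β) : (pinit CG CH r).cg
    = if CG.init = r.1 then CG.init else CG.move [CG.init] [r.1] := rfl
open Classical in
lemma pinit_ch (r : α × β) : (pinit CG CH r).ch
    = if CH.init = r.2 then CH.init else CH.move [CH.init] [r.2] := rfl
open Classical in
lemma pinit_Gc (r : α × β) : (pinit CG CH r).Gc
    = if CG.init = r.1 then [CG.init] else [CG.move [CG.init] [r.1], CG.init] := rfl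
open Classical in
lemma pinit_Hc (r : α × β) : (pinit CG CH r).Hc
    = if CH.init = r.2 then [CH.init] else [CH.move [CH.init] [r.2], CH.init] := rfl
lemma pinit_Gr (r : α × β) : (pinit CG CH r).Gr = [r.1] := rfl
lemma pinit_Hr (r : α × β) : (pinit CG CH r).Hr = [r.2] := rfl
lemma pinit_shG (r : α × β) : (pinit CG CH r).shG
    = (CG.init = r.1 ∨ CG.move [CG.init] [r.1] = r.1) := rfl
lemma pinit_shH (r : α × β) : (pinit CG CH r).shH
    = (CH.init = r.2 ∨ CH.move [CH.init] [r.2] = r.2) := rfl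
lemma pinit_rp (r : α × β) : (pinit CG CH r).rp = r := rfl

structure MInv (n : ℕ) : Prop where
  crp : (pS G H CG CH RS n).rp = pR G H CG CH RS n
  cpos : pC G H CG CH RS (n+1) = (pS G H CG CH RS n).pos
  sg : (pS G H CG CH RS n).shG → (pS G H CG CH RS n).cg = (pR G H CG CH RS n).1
  sh : (pS G H CG CH RS n).shH → (pS G H CG CH RS n).ch = (pR G H CG CH RS n).2
  gi : ¬ (pS G H CG CH RS n).shG → ∃ j,
        (pS G H CG CH RS n).Gr = robHist CG (RSG G H CG CH RS) j ∧
        (pS G H CG CH RS n).Gc = copHist CG (RSG G H CG CH RS) (j+1) ∧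
        (pS G H CG CH RS n).cg = copPos CG (RSG G H CG CH RS) (j+1) ∧
        (pR G H CG CH RS n).1 = robPos CG (RSG G H CG CH RS) j ∧
        ∀ i ≤ j, copPos CG (RSG G H CG CH RS) i ≠ robPos CG (RSG G H CG CH RS) i ∧
          copPos CG (RSG G H CG CH RS) (i+1) ≠ robPos CG (RSG G H CG CH RS) i
  hi : ¬ (pS G H CG CH RS n).shH → ∃ j,
        (pS G H CG CH RS n).Hr = robHist CH (RSH G H CG CH RS) j ∧
        (pS G H CG CH RS n).Hc = copHist CH (RSH G H CG CH RS) (j+1) ∧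
        (pS G H CG CH RS n).ch = copPos CH (RSH G H CG CH RS) (j+1) ∧
        (pR G H CG CH RS n).2 = robPos CH (RSH G H CG CH RS) j ∧
        ∀ i ≤ j, copPos CH (RSH G H CG CH RS) i ≠ robPos CH (RSH G H CG CH RS) i ∧
          copPos CH (RSH G H CG CH RS) (i+1) ≠ robPos CH (RSH G H CG CH RS) i
  cap : (pS G H CG CH RS n).shG → (pS G H CG CH RS n).shH →
        ∃ k ≤ n, pC G H CG CH RS k = pR G H CG CH RS k ∨
          pC G H CG CH RS (k+1) = pR G H CG CH RS k

lemma minv (hLG : CG.Legal G) (hLH : CH.Legal H) (hPF : CH.PassesFirst)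
    (hRS : RS.Legal (G □ H)) : ∀ n, MInv G H CG CH RS n := by
  intro n
  induction n with
  | zero =>
    have hpf : CH.move [CH.init] [(pR G H CG CH RS 0).2] = CH.init := hPF _
    have hch : (pS G H CG CH RS 0).ch = CH.init := by
      rw [pS_zero, pinit_ch]
      split_ifs with h
      · rfl
      · exact hpf
    have hcpos : pC G H CG CH RS 1 = (pS G H CG CH RS 0).pos := by
      rw [pC_succ]
      have hcond : (pS G H CG CH RS 0).pos = pC G H CG CH RS 0 ∨
          (G □ H).Adj (pC G H CG CH RS 0) (pS G H CG CH RS 0).pos := by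
        rw [pC_zero]
        by_cases hc : CG.init = (pR G H CG CH RS 0).1
        · left
          apply Prod.ext
          · show (pS G H CG CH RS 0).cg = CG.init
            rw [pS_zero, pinit_cg, if_pos hc]
          · exact hch
        · rcases hLG CG.init [] [(pR G H CG CH RS 0).1] with he | ha
          · left
            apply Prod.ext
            · show (pS G H CG CH RS 0).cg = CG.init
              rw [pS_zero, pinit_cg, if_neg hc]; exact he
            · exact hch
          · right
            have h1 : (pS G H CG CH RS 0).pos = ((pS G H CG CH RS 0).cg, CH.init) := by
              rw [← hch]
              rfl
            rw [h1, pS_zero, pinit_cg, if_neg hc]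
            exact boxProd_adj.mpr (Or.inl ⟨ha, rfl⟩)
      rw [if_pos hcond]
    have hsg0 : (pS G H CG CH RS 0).shG → (pS G H CG CH RS 0).cg = (pR G H CG CH RS 0).1 := by
      intro h
      rw [pS_zero, pinit_shG] at h
      rw [pS_zero, pinit_cg]
      rcases h with h | h
      · rw [if_pos h]; exact h
      · split_ifs with hc
        · exact hc
        · exact h
    have hsh0 : (pS G H CG CH RS 0).shH → (pS G H CG CH RS 0).ch = (pR G H CG CH RS 0).2 := by
      intro h
      rw [pS_zero, pinit_shH] at h
      rw [hch]
      rcases h with h | h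
      · exact h
      · rw [← hpf]; exact h
    have hcap0 : (pS G H CG CH RS 0).shG → (pS G H CG CH RS 0).shH →
        ∃ k ≤ 0, pC G H CG CH RS k = pR G H CG CH RS k ∨
          pC G H CG CH RS (k+1) = pR G H CG CH RS k := by
      intro hsg hsh
      rw [pS_zero, pinit_shH] at hsh
      have hy : CH.init = (pR G H CG CH RS 0).2 := by
        rcases hsh with h | h
        · exact h
        · rw [← hpf]; exact h
      refine ⟨0, le_refl 0, ?_⟩
      rw [pS_zero, pinit_shG] at hsg
      rcases hsg with hx | hx
      · left
        rw [pC_zero]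
        exact Prod.ext hx hy
      · right
        rw [hcpos]
        apply Prod.ext
        · show (pS G H CG CH RS 0).cg = (pR G H CG CH RS 0).1
          rw [pS_zero, pinit_cg]
          split_ifs with hc
          · exact hc
          · exact hx
        · show (pS G H CG CH RS 0).ch = (pR G H CG CH RS 0).2
          rw [hch]; exact hy
    refine ⟨rfl, hcpos, hsg0, hsh0, ?_, ?_, hcap0⟩
    · intro hng
      rw [pS_zero, pinit_shG] at hng
      push_neg at hng
      obtain ⟨hng1, hng2⟩ := hng
      refine ⟨0, rfl, ?_, ?_, rfl, ?_⟩
      · rw [pS_zero, pinit_Gc, if_neg hng1]; rfl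
      · rw [pS_zero, pinit_cg, if_neg hng1]; rfl
      · intro i hi
        obtain rfl : i = 0 := Nat.le_zero.mp hi
        exact ⟨hng1, hng2⟩
    · intro hnh
      rw [pS_zero, pinit_shH] at hnh
      push_neg at hnh
      obtain ⟨hnh1, hnh2⟩ := hnh
      refine ⟨0, rfl, ?_, ?_, rfl, ?_⟩
      · rw [pS_zero, pinit_Hc, if_neg hnh1]; rfl
      · rw [pS_zero, pinit_ch, if_neg hnh1]; rfl
      · intro i hi
        obtain rfl : i = 0 := Nat.le_zero.mp hi
        exact ⟨hnh1, hnh2⟩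
  | succ n ih =>
    have hstep := pS_succ G H CG CH RS n
    rcases pstep_cases CG CH (pS G H CG CH RS n) (pR G H CG CH RS (n+1)) with
      ⟨h1, h2, hs⟩ | ⟨h1, h2, h3, hs⟩ | ⟨h1, h2, h3, hs⟩ |
      ⟨h1, h2, hs⟩ | ⟨h1, h2, h3, hs⟩ | ⟨h1, h2, h3, hs⟩
    · -- A1 : robber moved in G, shadow-G active: copy
      rw [hs] at hstep
      rw [ih.crp] at h1
      have hmv : G.Adj (pR G H CG CH RS n).1 (pR G H CG CH RS (n+1)).1 ∧
          (pR G H CG CH RS (n+1)).2 = (pR G H CG CH RS n).2 := by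
        rcases pR_step G H CG CH RS hRS n with he | ha
        · exact absurd (congrArg Prod.fst he) h1
        · rcases boxProd_adj.mp ha with ⟨hadj, hsnd⟩ | ⟨_, hfst⟩
          · exact ⟨hadj, hsnd.symm⟩
          · exact absurd hfst.symm h1
      have hcg' : (pS G H CG CH RS (n+1)).cg = (pR G H CG CH RS (n+1)).1 := by rw [hstep]
      have hch' : (pS G H CG CH RS (n+1)).ch = (pS G H CG CH RS n).ch := by rw [hstep]
      have hsG' : (pS G H CG CH RS (n+1)).shG = (pS G H CG CH RS n).shG := by rw [hstep]
      have hsH' : (pS G H CG CH RS (n+1)).shH = (pS G H CG CH RS n).shH := by rw [hstep]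
      have hHr' : (pS G H CG CH RS (n+1)).Hr = (pS G H CG CH RS n).Hr := by rw [hstep]
      have hHc' : (pS G H CG CH RS (n+1)).Hc = (pS G H CG CH RS n).Hc := by rw [hstep]
      have hrp' : (pS G H CG CH RS (n+1)).rp = pR G H CG CH RS (n+1) := by rw [hstep]
      have hpos' : (pS G H CG CH RS (n+1)).pos
          = ((pR G H CG CH RS (n+1)).1, (pS G H CG CH RS n).ch) := by
        rw [show (pS G H CG CH RS (n+1)).pos
          = ((pS G H CG CH RS (n+1)).cg, (pS G H CG CH RS (n+1)).ch) from rfl, hcg', hch']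
      have hcpos : pC G H CG CH RS (n+2) = (pS G H CG CH RS (n+1)).pos := by
        have hcond : (pS G H CG CH RS (n+1)).pos = (pS G H CG CH RS n).pos ∨
            (G □ H).Adj ((pS G H CG CH RS n).pos) ((pS G H CG CH RS (n+1)).pos) := by
          right
          rw [hpos', show (pS G H CG CH RS n).pos
            = ((pS G H CG CH RS n).cg, (pS G H CG CH RS n).ch) from rfl, ih.sg h2]
          exact boxProd_adj.mpr (Or.inl ⟨hmv.1, rfl⟩)
        rw [pC_succ, ih.cpos, if_pos hcond]
      refine ⟨hrp', hcpos, ?_, ?_, ?_, ?_, ?_⟩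
      · intro _; exact hcg'
      · intro hh
        rw [hsH'] at hh
        rw [hch', hmv.2]
        exact ih.sh hh
      · intro hng
        rw [hsG'] at hng
        exact absurd h2 hng
      · intro hnh
        rw [hsH'] at hnh
        obtain ⟨j, e1, e2, e3, e4, e5⟩ := ih.hi hnh
        exact ⟨j, by rw [hHr']; exact e1, by rw [hHc']; exact e2, by rw [hch']; exact e3,
          by rw [hmv.2]; exact e4, e5⟩
      · intro hg' hh'
        rw [hsG'] at hg'; rw [hsH'] at hh'
        obtain ⟨k, hk, hc⟩ := ih.cap hg' hh'
        exact ⟨k, hk.trans (Nat.le_succ n), hc⟩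
    · -- A2 : robber moved in G onto cop column : enter shadow G
      rw [hs] at hstep
      rw [ih.crp] at h1
      have hmv : G.Adj (pR G H CG CH RS n).1 (pR G H CG CH RS (n+1)).1 ∧
          (pR G H CG CH RS (n+1)).2 = (pR G H CG CH RS n).2 := by
        rcases pR_step G H CG CH RS hRS n with he | ha
        · exact absurd (congrArg Prod.fst he) h1
        · rcases boxProd_adj.mp ha with ⟨hadj, hsnd⟩ | ⟨_, hfst⟩
          · exact ⟨hadj, hsnd.symm⟩
          · exact absurd hfst.symm h1
      have hcg' : (pS G H CG CH RS (n+1)).cg = (pS G H CG CH RS n).cg := by rw [hstep]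
      have hch' : (pS G H CG CH RS (n+1)).ch = (pS G H CG CH RS n).ch := by rw [hstep]
      have hsG' : (pS G H CG CH RS (n+1)).shG = True := by rw [hstep]
      have hsH' : (pS G H CG CH RS (n+1)).shH = (pS G H CG CH RS n).shH := by rw [hstep]
      have hHr' : (pS G H CG CH RS (n+1)).Hr = (pS G H CG CH RS n).Hr := by rw [hstep]
      have hHc' : (pS G H CG CH RS (n+1)).Hc = (pS G H CG CH RS n).Hc := by rw [hstep]
      have hrp' : (pS G H CG CH RS (n+1)).rp = pR G H CG CH RS (n+1) := by rw [hstep]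
      have hpos' : (pS G H CG CH RS (n+1)).pos = (pS G H CG CH RS n).pos := by
        rw [show (pS G H CG CH RS (n+1)).pos
          = ((pS G H CG CH RS (n+1)).cg, (pS G H CG CH RS (n+1)).ch) from rfl, hcg', hch']
        rfl
      have hcpos : pC G H CG CH RS (n+2) = (pS G H CG CH RS (n+1)).pos := by
        rw [pC_succ, ih.cpos, if_pos (Or.inl hpos')]
      refine ⟨hrp', hcpos, ?_, ?_, ?_, ?_, ?_⟩
      · intro _; rw [hcg']; exact h3
      · intro hh
        rw [hsH'] at hh
        rw [hch', hmv.2]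
        exact ih.sh hh
      · intro hng
        rw [hsG'] at hng
        exact absurd trivial hng
      · intro hnh
        rw [hsH'] at hnh
        obtain ⟨j, e1, e2, e3, e4, e5⟩ := ih.hi hnh
        exact ⟨j, by rw [hHr']; exact e1, by rw [hHc']; exact e2, by rw [hch']; exact e3,
          by rw [hmv.2]; exact e4, e5⟩
      · intro _ hh'
        rw [hsH'] at hh'
        refine ⟨n+1, le_refl _, Or.inl ?_⟩
        rw [ih.cpos]
        apply Prod.ext
        · show (pS G H CG CH RS n).cg = (pR G H CG CH RS (n+1)).1
          exact h3
        · show (pS G H CG CH RS n).ch = (pR G H CG CH RS (n+1)).2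
          rw [hmv.2]; exact ih.sh hh'
    · -- A3 : robber moved in G, cop responds with CG
      rw [hs] at hstep
      rw [ih.crp] at h1
      have hmv : G.Adj (pR G H CG CH RS n).1 (pR G H CG CH RS (n+1)).1 ∧
          (pR G H CG CH RS (n+1)).2 = (pR G H CG CH RS n).2 := by
        rcases pR_step G H CG CH RS hRS n with he | ha
        · exact absurd (congrArg Prod.fst he) h1
        · rcases boxProd_adj.mp ha with ⟨hadj, hsnd⟩ | ⟨_, hfst⟩
          · exact ⟨hadj, hsnd.symm⟩
          · exact absurd hfst.symm h1
      obtain ⟨j, e1, e2, e3, e4, e5⟩ := ih.gi h2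
      have hGr' : (pS G H CG CH RS (n+1)).Gr
          = (pR G H CG CH RS (n+1)).1 :: (pS G H CG CH RS n).Gr := by rw [hstep]
      have hGc' : (pS G H CG CH RS (n+1)).Gc
          = CG.move (pS G H CG CH RS n).Gc
              ((pR G H CG CH RS (n+1)).1 :: (pS G H CG CH RS n).Gr)
            :: (pS G H CG CH RS n).Gc := by rw [hstep]
      have hcg' : (pS G H CG CH RS (n+1)).cg
          = CG.move (pS G H CG CH RS n).Gc
              ((pR G H CG CH RS (n+1)).1 :: (pS G H CG CH RS n).Gr) := by rw [hstep]
      have hch' : (pS G H CG CH RS (n+1)).ch = (pS G H CG CH RS n).ch := by rw [hstep]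
      have hsG' : (pS G H CG CH RS (n+1)).shG
          = (CG.move (pS G H CG CH RS n).Gc
              ((pR G H CG CH RS (n+1)).1 :: (pS G H CG CH RS n).Gr)
            = (pR G H CG CH RS (n+1)).1) := by rw [hstep]
      have hsH' : (pS G H CG CH RS (n+1)).shH = (pS G H CG CH RS n).shH := by rw [hstep]
      have hHr' : (pS G H CG CH RS (n+1)).Hr = (pS G H CG CH RS n).Hr := by rw [hstep]
      have hHc' : (pS G H CG CH RS (n+1)).Hc = (pS G H CG CH RS n).Hc := by rw [hstep]
      have hrp' : (pS G H CG CH RS (n+1)).rp = pR G H CG CH RS (n+1) := by rw [hstep]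
      have hnext : nextG G H CG CH RS ((pS G H CG CH RS n).Gr) = (pR G H CG CH RS (n+1)).1 :=
        nextG_eq G H CG CH RS rfl hGr'
      have hrj : robPos CG (RSG G H CG CH RS) (j+1) = (pR G H CG CH RS (n+1)).1 := by
        rw [robPos_succ]
        show nextG G H CG CH RS (robHist CG (RSG G H CG CH RS) j) = _
        rw [← e1]; exact hnext
      have hcj : copPos CG (RSG G H CG CH RS) (j+1+1)
          = CG.move (pS G H CG CH RS n).Gc
              ((pR G H CG CH RS (n+1)).1 :: (pS G H CG CH RS n).Gr) := by
        rw [copPos_succ, robHist_succ, hrj, ← e1, ← e2]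
      have hpos' : (pS G H CG CH RS (n+1)).pos
          = (CG.move (pS G H CG CH RS n).Gc
              ((pR G H CG CH RS (n+1)).1 :: (pS G H CG CH RS n).Gr),
             (pS G H CG CH RS n).ch) := by
        rw [show (pS G H CG CH RS (n+1)).pos
          = ((pS G H CG CH RS (n+1)).cg, (pS G H CG CH RS (n+1)).ch) from rfl, hcg', hch']
      have hcondLeg : CG.move (pS G H CG CH RS n).Gc
            ((pR G H CG CH RS (n+1)).1 :: (pS G H CG CH RS n).Gr) = (pS G H CG CH RS n).cg ∨
          G.Adj (pS G H CG CH RS n).cg (CG.move (pS G H CG CH RS n).Gc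
            ((pR G H CG CH RS (n+1)).1 :: (pS G H CG CH RS n).Gr)) := by
        rw [e3, e2]
        exact hLG _ _ _
      have hcpos : pC G H CG CH RS (n+2) = (pS G H CG CH RS (n+1)).pos := by
        have hcond : (pS G H CG CH RS (n+1)).pos = (pS G H CG CH RS n).pos ∨
            (G □ H).Adj ((pS G H CG CH RS n).pos) ((pS G H CG CH RS (n+1)).pos) := by
          rcases hcondLeg with he | ha
          · left
            rw [hpos', he]
            rfl
          · right
            rw [hpos', show (pS G H CG CH RS n).pos
              = ((pS G H CG CH RS n).cg, (pS G H CG CH RS n).ch) from rfl]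
            exact boxProd_adj.mpr (Or.inl ⟨ha, rfl⟩)
        rw [pC_succ, ih.cpos, if_pos hcond]
      refine ⟨hrp', hcpos, ?_, ?_, ?_, ?_, ?_⟩
      · intro hg'
        rw [hsG'] at hg'
        rw [hcg']; exact hg'
      · intro hh
        rw [hsH'] at hh
        rw [hch', hmv.2]
        exact ih.sh hh
      · intro hng'
        rw [hsG'] at hng'
        refine ⟨j+1, ?_, ?_, ?_, hrj.symm, ?_⟩
        · rw [hGr', robHist_succ, hrj, e1]
        · rw [hGc', copHist_succ, hcj, e2]
        · rw [hcg', hcj]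
        · intro i hi
          rcases Nat.of_le_succ hi with hij | hij
          · exact e5 i hij
          · subst hij
            constructor
            · rw [hrj, ← e3]
              exact h3
            · rw [hcj, hrj]
              exact hng'
      · intro hnh
        rw [hsH'] at hnh
        obtain ⟨j', f1, f2, f3, f4, f5⟩ := ih.hi hnh
        exact ⟨j', by rw [hHr']; exact f1, by rw [hHc']; exact f2, by rw [hch']; exact f3,
          by rw [hmv.2]; exact f4, f5⟩
      · intro hg' hh'
        rw [hsG'] at hg'; rw [hsH'] at hh'
        refine ⟨n+1, le_refl _, Or.inr ?_⟩
        rw [hcpos, hpos']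
        apply Prod.ext
        · exact hg'
        · show (pS G H CG CH RS n).ch = (pR G H CG CH RS (n+1)).2
          rw [hmv.2]; exact ih.sh hh'
    · -- B1 : robber moved in H (or passed), shadow-H active: copy
      rw [hs] at hstep
      rw [ih.crp] at h1
      have hmv : (pR G H CG CH RS (n+1)).2 = (pR G H CG CH RS n).2 ∨
          H.Adj (pR G H CG CH RS n).2 (pR G H CG CH RS (n+1)).2 := by
        rcases pR_step G H CG CH RS hRS n with he | ha
        · exact Or.inl (congrArg Prod.snd he)
        · rcases boxProd_adj.mp ha with ⟨hadj, _⟩ | ⟨hadj, _⟩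
          · rw [h1] at hadj
            exact absurd hadj (G.irrefl)
          · exact Or.inr hadj
      have hcg' : (pS G H CG CH RS (n+1)).cg = (pS G H CG CH RS n).cg := by rw [hstep]
      have hch' : (pS G H CG CH RS (n+1)).ch = (pR G H CG CH RS (n+1)).2 := by rw [hstep]
      have hsG' : (pS G H CG CH RS (n+1)).shG = (pS G H CG CH RS n).shG := by rw [hstep]
      have hsH' : (pS G H CG CH RS (n+1)).shH = (pS G H CG CH RS n).shH := by rw [hstep]
      have hGr' : (pS G H CG CH RS (n+1)).Gr = (pS G H CG CH RS n).Gr := by rw [hstep]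
      have hGc' : (pS G H CG CH RS (n+1)).Gc = (pS G H CG CH RS n).Gc := by rw [hstep]
      have hrp' : (pS G H CG CH RS (n+1)).rp = pR G H CG CH RS (n+1) := by rw [hstep]
      have hpos' : (pS G H CG CH RS (n+1)).pos
          = ((pS G H CG CH RS n).cg, (pR G H CG CH RS (n+1)).2) := by
        rw [show (pS G H CG CH RS (n+1)).pos
          = ((pS G H CG CH RS (n+1)).cg, (pS G H CG CH RS (n+1)).ch) from rfl, hcg', hch']
      have hcpos : pC G H CG CH RS (n+2) = (pS G H CG CH RS (n+1)).pos := by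
        have hcond : (pS G H CG CH RS (n+1)).pos = (pS G H CG CH RS n).pos ∨
            (G □ H).Adj ((pS G H CG CH RS n).pos) ((pS G H CG CH RS (n+1)).pos) := by
          rcases hmv with he | ha
          · left
            rw [hpos', he, ← ih.sh h2]
            rfl
          · right
            rw [hpos', show (pS G H CG CH RS n).pos
              = ((pS G H CG CH RS n).cg, (pS G H CG CH RS n).ch) from rfl]
            refine boxProd_adj.mpr (Or.inr ⟨?_, rfl⟩)
            rw [ih.sh h2]; exact ha
        rw [pC_succ, ih.cpos, if_pos hcond]
      refine ⟨hrp', hcpos, ?_, ?_, ?_, ?_, ?_⟩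
      · intro hg
        rw [hsG'] at hg
        rw [hcg', h1]
        exact ih.sg hg
      · intro _; exact hch'
      · intro hng
        rw [hsG'] at hng
        obtain ⟨j, e1, e2, e3, e4, e5⟩ := ih.gi hng
        exact ⟨j, by rw [hGr']; exact e1, by rw [hGc']; exact e2, by rw [hcg']; exact e3,
          by rw [h1]; exact e4, e5⟩
      · intro hnh
        rw [hsH'] at hnh
        exact absurd h2 hnh
      · intro hg' hh'
        rw [hsG'] at hg'; rw [hsH'] at hh'
        obtain ⟨k, hk, hc⟩ := ih.cap hg' hh'
        exact ⟨k, hk.trans (Nat.le_succ n), hc⟩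
    · -- B2 : robber moved in H onto cop row : enter shadow H
      rw [hs] at hstep
      rw [ih.crp] at h1
      have hcg' : (pS G H CG CH RS (n+1)).cg = (pS G H CG CH RS n).cg := by rw [hstep]
      have hch' : (pS G H CG CH RS (n+1)).ch = (pS G H CG CH RS n).ch := by rw [hstep]
      have hsG' : (pS G H CG CH RS (n+1)).shG = (pS G H CG CH RS n).shG := by rw [hstep]
      have hsH' : (pS G H CG CH RS (n+1)).shH = True := by rw [hstep]
      have hGr' : (pS G H CG CH RS (n+1)).Gr = (pS G H CG CH RS n).Gr := by rw [hstep]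
      have hGc' : (pS G H CG CH RS (n+1)).Gc = (pS G H CG CH RS n).Gc := by rw [hstep]
      have hrp' : (pS G H CG CH RS (n+1)).rp = pR G H CG CH RS (n+1) := by rw [hstep]
      have hpos' : (pS G H CG CH RS (n+1)).pos = (pS G H CG CH RS n).pos := by
        rw [show (pS G H CG CH RS (n+1)).pos
          = ((pS G H CG CH RS (n+1)).cg, (pS G H CG CH RS (n+1)).ch) from rfl, hcg', hch']
        rfl
      have hcpos : pC G H CG CH RS (n+2) = (pS G H CG CH RS (n+1)).pos := by
        rw [pC_succ, ih.cpos, if_pos (Or.inl hpos')]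
      refine ⟨hrp', hcpos, ?_, ?_, ?_, ?_, ?_⟩
      · intro hg
        rw [hsG'] at hg
        rw [hcg', h1]
        exact ih.sg hg
      · intro _
        rw [hch']; exact h3
      · intro hng
        rw [hsG'] at hng
        obtain ⟨j, e1, e2, e3, e4, e5⟩ := ih.gi hng
        exact ⟨j, by rw [hGr']; exact e1, by rw [hGc']; exact e2, by rw [hcg']; exact e3,
          by rw [h1]; exact e4, e5⟩
      · intro hnh
        rw [hsH'] at hnh
        exact absurd trivial hnh
      · intro hg' _
        rw [hsG'] at hg'
        refine ⟨n+1, le_refl _, Or.inl ?_⟩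
        rw [ih.cpos]
        apply Prod.ext
        · show (pS G H CG CH RS n).cg = (pR G H CG CH RS (n+1)).1
          rw [h1]; exact ih.sg hg'
        · show (pS G H CG CH RS n).ch = (pR G H CG CH RS (n+1)).2
          exact h3
    · -- B3 : robber moved in H (or passed), cop responds with CH
      rw [hs] at hstep
      rw [ih.crp] at h1
      obtain ⟨j, e1, e2, e3, e4, e5⟩ := ih.hi h2
      have hHr' : (pS G H CG CH RS (n+1)).Hr
          = (pR G H CG CH RS (n+1)).2 :: (pS G H CG CH RS n).Hr := by rw [hstep]
      have hHc' : (pS G H CG CH RS (n+1)).Hc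
          = CH.move (pS G H CG CH RS n).Hc
              ((pR G H CG CH RS (n+1)).2 :: (pS G H CG CH RS n).Hr)
            :: (pS G H CG CH RS n).Hc := by rw [hstep]
      have hch' : (pS G H CG CH RS (n+1)).ch
          = CH.move (pS G H CG CH RS n).Hc
              ((pR G H CG CH RS (n+1)).2 :: (pS G H CG CH RS n).Hr) := by rw [hstep]
      have hcg' : (pS G H CG CH RS (n+1)).cg = (pS G H CG CH RS n).cg := by rw [hstep]
      have hsH' : (pS G H CG CH RS (n+1)).shH
          = (CH.move (pS G H CG CH RS n).Hc
              ((pR G H CG CH RS (n+1)).2 :: (pS G H CG CH RS n).Hr)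
            = (pR G H CG CH RS (n+1)).2) := by rw [hstep]
      have hsG' : (pS G H CG CH RS (n+1)).shG = (pS G H CG CH RS n).shG := by rw [hstep]
      have hGr' : (pS G H CG CH RS (n+1)).Gr = (pS G H CG CH RS n).Gr := by rw [hstep]
      have hGc' : (pS G H CG CH RS (n+1)).Gc = (pS G H CG CH RS n).Gc := by rw [hstep]
      have hrp' : (pS G H CG CH RS (n+1)).rp = pR G H CG CH RS (n+1) := by rw [hstep]
      have hnext : nextH G H CG CH RS ((pS G H CG CH RS n).Hr) = (pR G H CG CH RS (n+1)).2 :=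
        nextH_eq G H CG CH RS rfl hHr'
      have hrj : robPos CH (RSH G H CG CH RS) (j+1) = (pR G H CG CH RS (n+1)).2 := by
        rw [robPos_succ]
        show nextH G H CG CH RS (robHist CH (RSH G H CG CH RS) j) = _
        rw [← e1]; exact hnext
      have hcj : copPos CH (RSH G H CG CH RS) (j+1+1)
          = CH.move (pS G H CG CH RS n).Hc
              ((pR G H CG CH RS (n+1)).2 :: (pS G H CG CH RS n).Hr) := by
        rw [copPos_succ, robHist_succ, hrj, ← e1, ← e2]
      have hpos' : (pS G H CG CH RS (n+1)).pos
          = ((pS G H CG CH RS n).cg,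
             CH.move (pS G H CG CH RS n).Hc
              ((pR G H CG CH RS (n+1)).2 :: (pS G H CG CH RS n).Hr)) := by
        rw [show (pS G H CG CH RS (n+1)).pos
          = ((pS G H CG CH RS (n+1)).cg, (pS G H CG CH RS (n+1)).ch) from rfl, hcg', hch']
      have hcondLeg : CH.move (pS G H CG CH RS n).Hc
            ((pR G H CG CH RS (n+1)).2 :: (pS G H CG CH RS n).Hr) = (pS G H CG CH RS n).ch ∨
          H.Adj (pS G H CG CH RS n).ch (CH.move (pS G H CG CH RS n).Hc
            ((pR G H CG CH RS (n+1)).2 :: (pS G H CG CH RS n).Hr)) := by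
        rw [e3, e2]
        exact hLH _ _ _
      have hcpos : pC G H CG CH RS (n+2) = (pS G H CG CH RS (n+1)).pos := by
        have hcond : (pS G H CG CH RS (n+1)).pos = (pS G H CG CH RS n).pos ∨
            (G □ H).Adj ((pS G H CG CH RS n).pos) ((pS G H CG CH RS (n+1)).pos) := by
          rcases hcondLeg with he | ha
          · left
            rw [hpos', he]
            rfl
          · right
            rw [hpos', show (pS G H CG CH RS n).pos
              = ((pS G H CG CH RS n).cg, (pS G H CG CH RS n).ch) from rfl]
            exact boxProd_adj.mpr (Or.inr ⟨ha, rfl⟩)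
        rw [pC_succ, ih.cpos, if_pos hcond]
      refine ⟨hrp', hcpos, ?_, ?_, ?_, ?_, ?_⟩
      · intro hg
        rw [hsG'] at hg
        rw [hcg', h1]
        exact ih.sg hg
      · intro hh'
        rw [hsH'] at hh'
        rw [hch']; exact hh'
      · intro hng
        rw [hsG'] at hng
        obtain ⟨j', f1, f2, f3, f4, f5⟩ := ih.gi hng
        exact ⟨j', by rw [hGr']; exact f1, by rw [hGc']; exact f2, by rw [hcg']; exact f3,
          by rw [h1]; exact f4, f5⟩
      · intro hnh'
        rw [hsH'] at hnh'
        refine ⟨j+1, ?_, ?_, ?_, hrj.symm, ?_⟩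
        · rw [hHr', robHist_succ, hrj, e1]
        · rw [hHc', copHist_succ, hcj, e2]
        · rw [hch', hcj]
        · intro i hi
          rcases Nat.of_le_succ hi with hij | hij
          · exact e5 i hij
          · subst hij
            constructor
            · rw [hrj, ← e3]
              exact h3
            · rw [hcj, hrj]
              exact hnh'
      · intro hg' hh'
        rw [hsG'] at hg'; rw [hsH'] at hh'
        refine ⟨n+1, le_refl _, Or.inr ?_⟩
        rw [hcpos, hpos']
        apply Prod.ext
        · show (pS G H CG CH RS n).cg = (pR G H CG CH RS (n+1)).1
          rw [h1]; exact ih.sg hg'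
        · exact hh'

lemma shG_mono {n m : ℕ} (h : n ≤ m) (hg : (pS G H CG CH RS n).shG) :
    (pS G H CG CH RS m).shG := by
  induction m with
  | zero => cases Nat.le_zero.mp h; exact hg
  | succ m ih =>
    rcases Nat.of_le_succ h with h' | h'
    · have hm := ih h'
      rcases pstep_cases CG CH (pS G H CG CH RS m) (pR G H CG CH RS (m+1)) with
        ⟨_, _, hs⟩|⟨_, h2, _, hs⟩|⟨_, h2, _, hs⟩|⟨_, _, hs⟩|⟨_, _, _, hs⟩|⟨_, _, _, hs⟩ <;>
        rw [pS_succ, hs] <;>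
        first
          | exact hm
          | exact trivial
          | exact absurd hm h2
    · subst h'; exact hg

lemma shH_mono {n m : ℕ} (h : n ≤ m) (hg : (pS G H CG CH RS n).shH) :
    (pS G H CG CH RS m).shH := by
  induction m with
  | zero => cases Nat.le_zero.mp h; exact hg
  | succ m ih =>
    rcases Nat.of_le_succ h with h' | h'
    · have hm := ih h'
      rcases pstep_cases CG CH (pS G H CG CH RS m) (pR G H CG CH RS (m+1)) with
        ⟨_, _, hs⟩|⟨_, _, _, hs⟩|⟨_, _, _, hs⟩|⟨_, _, hs⟩|⟨_, h2, _, hs⟩|⟨_, h2, _, hs⟩ <;>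
        rw [pS_succ, hs] <;>
        first
          | exact hm
          | exact trivial
          | exact absurd hm h2
    · subst h'; exact hg

lemma robHist_eq (CS : CopStrategy V) (RS' : RobberStrategy V) (j : ℕ) :
    robHist CS RS' j = robPos CS RS' j :: (play CS RS' j).2.2.2 := rfl

lemma RSG_legal (hLG : CG.Legal G) (hLH : CH.Legal H) (hPF : CH.PassesFirst)
    (hRS : RS.Legal (G □ H)) : (RSG G H CG CH RS).Legal G := by
  intro r0 ch rh
  show nextG G H CG CH RS (r0 :: rh) = r0 ∨ G.Adj r0 (nextG G H CG CH RS (r0 :: rh))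
  unfold nextG
  split
  · next h =>
    obtain ⟨h1', h2'⟩ := h.choose_spec
    generalize hNN : h.choose = N at h1' h2' ⊢
    rcases pstep_cases CG CH (pS G H CG CH RS N) (pR G H CG CH RS (N+1)) with
      ⟨e1, e2, hs⟩|⟨e1, e2, e3, hs⟩|⟨e1, e2, e3, hs⟩|⟨e1, e2, hs⟩|⟨e1, e2, e3, hs⟩|⟨e1, e2, e3, hs⟩ <;>
      rw [pS_succ, hs] at h2'
    · exact absurd h1' h2'
    · exact absurd h1' h2'
    · -- push branch
      right
      obtain ⟨j, f1, f2, f3, f4, f5⟩ := (minv G H CG CH RS hLG hLH hPF hRS N).gi e2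
      have hr0 : r0 = (pR G H CG CH RS N).1 := by
        have hcons : r0 :: rh
            = robPos CG (RSG G H CG CH RS) j :: (play CG (RSG G H CG CH RS) j).2.2.2 := by
          rw [← h1', f1, robHist_eq]
        rw [f4]
        exact (List.cons.injEq _ _ _ _ ▸ hcons).1
      rw [(minv G H CG CH RS hLG hLH hPF hRS N).crp] at e1
      rw [hr0]
      rcases pR_step G H CG CH RS hRS N with he | ha
      · exact absurd (congrArg Prod.fst he) e1
      · rcases boxProd_adj.mp ha with ⟨hadj, _⟩ | ⟨_, hfst⟩
        · exact hadj
        · exact absurd hfst.symm e1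
    · exact absurd h1' h2'
    · exact absurd h1' h2'
    · exact absurd h1' h2'
  · exact Or.inl rfl

lemma RSH_legal (hLG : CG.Legal G) (hLH : CH.Legal H) (hPF : CH.PassesFirst)
    (hRS : RS.Legal (G □ H)) : (RSH G H CG CH RS).Legal H := by
  intro r0 ch rh
  show nextH G H CG CH RS (r0 :: rh) = r0 ∨ H.Adj r0 (nextH G H CG CH RS (r0 :: rh))
  unfold nextH
  split
  · next h =>
    obtain ⟨h1', h2'⟩ := h.choose_spec
    generalize hNN : h.choose = N at h1' h2' ⊢
    rcases pstep_cases CG CH (pS G H CG CH RS N) (pR G H CG CH RS (N+1)) with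
      ⟨e1, e2, hs⟩|⟨e1, e2, e3, hs⟩|⟨e1, e2, e3, hs⟩|⟨e1, e2, hs⟩|⟨e1, e2, e3, hs⟩|⟨e1, e2, e3, hs⟩ <;>
      rw [pS_succ, hs] at h2'
    · exact absurd h1' h2'
    · exact absurd h1' h2'
    · exact absurd h1' h2'
    · exact absurd h1' h2'
    · exact absurd h1' h2'
    · -- push branch
      obtain ⟨j, f1, f2, f3, f4, f5⟩ := (minv G H CG CH RS hLG hLH hPF hRS N).hi e2
      have hr0 : r0 = (pR G H CG CH RS N).2 := by
        have hcons : r0 :: rh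
            = robPos CH (RSH G H CG CH RS) j :: (play CH (RSH G H CG CH RS) j).2.2.2 := by
          rw [← h1', f1, robHist_eq]
        rw [f4]
        exact (List.cons.injEq _ _ _ _ ▸ hcons).1
      rw [(minv G H CG CH RS hLG hLH hPF hRS N).crp] at e1
      rcases pR_step G H CG CH RS hRS N with he | ha
      · refine Or.inl ?_
        rw [hr0]
        exact congrArg Prod.snd he
      · rcases boxProd_adj.mp ha with ⟨hadj, _⟩ | ⟨hadj, _⟩
        · rw [e1] at hadj
          exact absurd hadj (G.irrefl)
        · refine Or.inr ?_
          rw [hr0]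
          exact hadj
  · exact Or.inl rfl

lemma dmgG (hLG : CG.Legal G) (hLH : CH.Legal H) (hPF : CH.PassesFirst)
    (hRS : RS.Legal (G □ H)) {m : ℕ} (hng : ¬ (pS G H CG CH RS m).shG) :
    (pR G H CG CH RS m).1 ∈ damageSet CG (RSG G H CG CH RS) := by
  obtain ⟨j, _, _, _, f4, f5⟩ := (minv G H CG CH RS hLG hLH hPF hRS m).gi hng
  exact ⟨j, f4.symm, f5⟩

lemma dmgH (hLG : CG.Legal G) (hLH : CH.Legal H) (hPF : CH.PassesFirst)
    (hRS : RS.Legal (G □ H)) {m : ℕ} (hnh : ¬ (pS G H CG CH RS m).shH) :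
    (pR G H CG CH RS m).2 ∈ damageSet CH (RSH G H CG CH RS) := by
  obtain ⟨j, _, _, _, f4, f5⟩ := (minv G H CG CH RS hLG hLH hPF hRS m).hi hnh
  exact ⟨j, f4.symm, f5⟩

lemma damage_cases (hLG : CG.Legal G) (hLH : CH.Legal H) (hPF : CH.PassesFirst)
    (hRS : RS.Legal (G □ H)) :
    damageSet (prodCop G H CG CH) RS ⊆
      damageSet CG (RSG G H CG CH RS) ×ˢ (Set.univ : Set β) ∨
    damageSet (prodCop G H CG CH) RS ⊆
      (Set.univ : Set α) ×ˢ damageSet CH (RSH G H CG CH RS) := by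
  classical
  have hblock : ∀ m, (∀ k ≤ m, pC G H CG CH RS k ≠ pR G H CG CH RS k ∧
      pC G H CG CH RS (k+1) ≠ pR G H CG CH RS k) →
      (pS G H CG CH RS m).shG → ¬ (pS G H CG CH RS m).shH := by
    intro m hPN hg hh
    obtain ⟨k, hk, hc⟩ := (minv G H CG CH RS hLG hLH hPF hRS m).cap hg hh
    rcases hc with hc | hc
    · exact (hPN k hk).1 hc
    · exact (hPN k hk).2 hc
  by_cases hgAll : ∀ m, ¬ (pS G H CG CH RS m).shG
  · left
    rintro ⟨a, b⟩ ⟨m, hv, hPN⟩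
    refine Set.mem_prod.mpr ⟨?_, trivial⟩
    have hd := dmgG G H CG CH RS hLG hLH hPF hRS (hgAll m)
    have hv' : pR G H CG CH RS m = (a, b) := hv
    rw [← hv']
    exact hd
  · push_neg at hgAll
    by_cases hhAll : ∀ m, ¬ (pS G H CG CH RS m).shH
    · right
      rintro ⟨a, b⟩ ⟨m, hv, hPN⟩
      refine Set.mem_prod.mpr ⟨trivial, ?_⟩
      have hd := dmgH G H CG CH RS hLG hLH hPF hRS (hhAll m)
      have hv' : pR G H CG CH RS m = (a, b) := hv
      rw [← hv']
      exact hd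
    · push_neg at hhAll
      have hNG : (pS G H CG CH RS (sInf {m | (pS G H CG CH RS m).shG})).shG :=
        Nat.sInf_mem hgAll
      have hNH : (pS G H CG CH RS (sInf {m | (pS G H CG CH RS m).shH})).shH :=
        Nat.sInf_mem hhAll
      rcases le_or_gt (sInf {m | (pS G H CG CH RS m).shG})
        (sInf {m | (pS G H CG CH RS m).shH}) with hle | hlt
      · right
        rintro ⟨a, b⟩ ⟨m, hv, hPN⟩
        refine Set.mem_prod.mpr ⟨trivial, ?_⟩
        have hnh : ¬ (pS G H CG CH RS m).shH := by
          intro hshHm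
          have hNHm : sInf {m | (pS G H CG CH RS m).shH} ≤ m := Nat.sInf_le hshHm
          exact hblock m hPN
            (shG_mono G H CG CH RS (le_trans hle hNHm) hNG) hshHm
        have hd := dmgH G H CG CH RS hLG hLH hPF hRS hnh
        have hv' : pR G H CG CH RS m = (a, b) := hv
        rw [← hv']
        exact hd
      · left
        rintro ⟨a, b⟩ ⟨m, hv, hPN⟩
        refine Set.mem_prod.mpr ⟨?_, trivial⟩
        have hng : ¬ (pS G H CG CH RS m).shG := by
          intro hshGm
          have hNGm : sInf {m | (pS G H CG CH RS m).shG} ≤ m := Nat.sInf_le hshGm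
          exact hblock m hPN hshGm
            (shH_mono G H CG CH RS (le_trans hlt.le hNGm) hNH)
        have hd := dmgG G H CG CH RS hLG hLH hPF hRS hng
        have hv' : pR G H CG CH RS m = (a, b) := hv
        rw [← hv']
        exact hd

lemma damage_le [Fintype α] [Fintype β] (dG dH : ℕ)
    (hLG : CG.Legal G) (hLH : CH.Legal H) (hPF : CH.PassesFirst)
    (hBG : ∀ RS' : RobberStrategy α, RS'.Legal G → (damageSet CG RS').ncard ≤ dG)
    (hBH : ∀ RS' : RobberStrategy β, RS'.Legal H → (damageSet CH RS').ncard ≤ dH)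
    (hRS : RS.Legal (G □ H)) :
    (damageSet (prodCop G H CG CH) RS).ncard
      ≤ max (dG * Fintype.card β) (dH * Fintype.card α) := by
  rcases damage_cases G H CG CH RS hLG hLH hPF hRS with hsub | hsub
  · refine le_trans (le_trans (Set.ncard_le_ncard hsub (Set.toFinite _)) ?_) (le_max_left _ _)
    have hcard : (damageSet CG (RSG G H CG CH RS) ×ˢ (Set.univ : Set β)).ncard
        = (damageSet CG (RSG G H CG CH RS)).ncard * Fintype.card β := by
      rw [← Nat.card_coe_set_eq, Nat.card_congr (Equiv.Set.prod _ _), Nat.card_prod,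
        Nat.card_coe_set_eq, Nat.card_coe_set_eq, Set.ncard_univ,
        Nat.card_eq_fintype_card]
    rw [hcard]
    exact Nat.mul_le_mul_right _ (hBG _ (RSG_legal G H CG CH RS hLG hLH hPF hRS))
  · refine le_trans (le_trans (Set.ncard_le_ncard hsub (Set.toFinite _)) ?_) (le_max_right _ _)
    have hcard : ((Set.univ : Set α) ×ˢ damageSet CH (RSH G H CG CH RS)).ncard
        = (damageSet CH (RSH G H CG CH RS)).ncard * Fintype.card α := by
      rw [← Nat.card_coe_set_eq, Nat.card_congr (Equiv.Set.prod _ _), Nat.card_prod,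
        Nat.card_coe_set_eq, Nat.card_coe_set_eq, Set.ncard_univ,
        Nat.card_eq_fintype_card, Nat.mul_comm]
    rw [hcard]
    exact Nat.mul_le_mul_right _ (hBH _ (RSH_legal G H CG CH RS hLG hLH hPF hRS))

end Analysis

/-- For any finite connected graphs `G` and `H`,
`dmg(G □ H) ≤ max {dmg(G)·|V(H)|, dmg'(H)·|V(G)|}`. -/
theorem dmg_boxProd_le_max {α β : Type*} [Fintype α] [Fintype β]
    (G : SimpleGraph α) (H : SimpleGraph β) (hG : G.Connected) (hH : H.Connected) :
    dmg (G □ H) ≤ max (dmg G * Fintype.card β) (dmg' H * Fintype.card α) := by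
  have hna : Nonempty α := hG.nonempty
  have hnb : Nonempty β := hH.nonempty
  obtain ⟨CGs, hLG, hBG⟩ : ∃ CS : CopStrategy α, CS.Legal G ∧
      ∀ RS : RobberStrategy α, RS.Legal G → (damageSet CS RS).ncard ≤ dmg G := by
    have hne : {n | ∃ CS : CopStrategy α, CS.Legal G ∧
        ∀ RS : RobberStrategy α, RS.Legal G → (damageSet CS RS).ncard ≤ n}.Nonempty := by
      refine ⟨Fintype.card α, ⟨⟨Classical.choice hna, fun ch _ =>
        match ch with | [] => Classical.choice hna | c :: _ => c⟩, ?_, ?_⟩⟩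
      · intro c ch rh; exact Or.inl rfl
      · intro RS _
        calc (damageSet _ RS).ncard ≤ (Set.univ : Set α).ncard :=
              Set.ncard_le_ncard (Set.subset_univ _) (Set.toFinite _)
          _ = Fintype.card α := by rw [Set.ncard_univ, Nat.card_eq_fintype_card]
    exact Nat.sInf_mem hne
  obtain ⟨CHs, hLH, hPF, hBH⟩ : ∃ CS : CopStrategy β, CS.Legal H ∧ CS.PassesFirst ∧
      ∀ RS : RobberStrategy β, RS.Legal H → (damageSet CS RS).ncard ≤ dmg' H := by
    have hne : {n | ∃ CS : CopStrategy β, CS.Legal H ∧ CS.PassesFirst ∧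
        ∀ RS : RobberStrategy β, RS.Legal H → (damageSet CS RS).ncard ≤ n}.Nonempty := by
      refine ⟨Fintype.card β, ⟨⟨Classical.choice hnb, fun ch _ =>
        match ch with | [] => Classical.choice hnb | c :: _ => c⟩, ?_, ?_, ?_⟩⟩
      · intro c ch rh; exact Or.inl rfl
      · intro r; rfl
      · intro RS _
        calc (damageSet _ RS).ncard ≤ (Set.univ : Set β).ncard :=
              Set.ncard_le_ncard (Set.subset_univ _) (Set.toFinite _)
          _ = Fintype.card β := by rw [Set.ncard_univ, Nat.card_eq_fintype_card]
    exact Nat.sInf_mem hne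
  have hmem : max (dmg G * Fintype.card β) (dmg' H * Fintype.card α) ∈
      {n | ∃ CS : CopStrategy (α × β), CS.Legal (G □ H) ∧
        ∀ RS : RobberStrategy (α × β), RS.Legal (G □ H) → (damageSet CS RS).ncard ≤ n} :=
    ⟨prodCop G H CGs CHs, prodCop_legal G H CGs CHs,
      fun RS hRS => damage_le G H CGs CHs RS (dmg G) (dmg' H) hLG hLH hPF hBG hBH hRS⟩
  exact Nat.sInf_le hmem
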